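/- arXiv:1307.0267 — 4 statements merged into one kernel-verified Lean document; each statement's English description precedes it below -/
import Mathlib

section
/- Let M be a 2×2 complex matrix with det M = 1. If tr M is not a real number, or if tr M is real with (tr M)² < 4, then the characteristic polynomial of M has no real root (M has no real eigenvalue), and moreover for every real t one has det((cos t)·1 − (sin t)·M) ≠ 0. -/
lemma key_aux (z : ℂ) (h : z.im ≠ 0 ∨ (z.im = 0 ∧ z.re ^ 2 < 4))
    (a b : ℝ) (hab : a ≠ 0 ∨ b ≠ 0) :
    (a : ℂ) ^ 2 - (a : ℂ) * b * z + (b : ℂ) ^ 2 ≠ 0 := by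
  intro heq
  rw [pow_two, pow_two] at heq
  have him : a * b * z.im = 0 := by
    have := congrArg Complex.im heq
    simpa [Complex.mul_im, Complex.mul_re] using this
  have hre : a * a - a * b * z.re + b * b = 0 := by
    have := congrArg Complex.re heq
    simpa [Complex.mul_re, Complex.mul_im] using this
  rcases h with hy | ⟨hy, hx⟩
  · have hab0 : a * b = 0 := by
      rcases mul_eq_zero.mp him with h' | h'
      · exact h'
      · exact absurd h' hy
    rw [hab0] at hre
    rcases hab with ha | hb
    · nlinarith [mul_self_pos.mpr ha, mul_self_nonneg b]
    · nlinarith [mul_self_pos.mpr hb, mul_self_nonneg a]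
  · have hb2 : b ^ 2 * (4 - z.re ^ 2) ≤ 0 := by
      nlinarith [sq_nonneg (2 * a - b * z.re)]
    have hbsq : b ^ 2 ≤ 0 := by nlinarith [sq_nonneg b]
    have hb0 : b = 0 := by
      have : b ^ 2 = 0 := le_antisymm hbsq (sq_nonneg b)
      exact pow_eq_zero_iff (by norm_num) |>.mp this
    rw [hb0] at hre
    have ha0 : a = 0 := by nlinarith [mul_self_nonneg a]
    rcases hab with ha | hb
    · exact ha ha0
    · exact hb hb0

lemma det_comb (M : Matrix (Fin 2) (Fin 2) ℂ) (a b : ℂ) :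
    (a • (1 : Matrix (Fin 2) (Fin 2) ℂ) - b • M).det
      = a ^ 2 - a * b * M.trace + b ^ 2 * M.det := by
  simp [Matrix.det_fin_two, Matrix.trace_fin_two, Matrix.one_apply]
  ring

lemma eval_charpoly (M : Matrix (Fin 2) (Fin 2) ℂ) (μ : ℂ) :
    Polynomial.eval μ M.charpoly = μ ^ 2 - μ * M.trace + M.det := by
  rw [Matrix.charpoly, ← Polynomial.coe_evalRingHom, RingHom.map_det]
  simp [Matrix.det_fin_two, Matrix.trace_fin_two, Matrix.charmatrix_apply,
    Matrix.one_apply]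
  ring

/-- Let `M` be a `2×2` complex matrix with `det M = 1`. If `tr M` is not a
real number, or if `tr M` is real with `(tr M)² < 4`, then the characteristic polynomial
of `M` has no real root, and for every real `t`,
`det((cos t)·1 − (sin t)·M) ≠ 0`. -/
theorem stmt_0 (M : Matrix (Fin 2) (Fin 2) ℂ) (hdet : M.det = 1)
    (h : M.trace.im ≠ 0 ∨ (M.trace.im = 0 ∧ M.trace.re ^ 2 < 4)) :
    (∀ μ : ℝ, Polynomial.eval (μ : ℂ) M.charpoly ≠ 0) ∧
      (∀ t : ℝ, ((Real.cos t : ℂ) • (1 : Matrix (Fin 2) (Fin 2) ℂ)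
          - (Real.sin t : ℂ) • M).det ≠ 0) := by
  constructor
  · intro μ
    rw [eval_charpoly, hdet]
    have := key_aux M.trace h μ 1 (Or.inr one_ne_zero)
    intro hc
    apply this
    rw [← hc]; push_cast; ring
  · intro t
    rw [det_comb, hdet]
    by_cases hs : Real.sin t = 0
    · have hc : Real.cos t ≠ 0 := by
        intro hc
        have := Real.sin_sq_add_cos_sq t
        rw [hs, hc] at this; norm_num at this
      have := key_aux M.trace h (Real.cos t) (Real.sin t) (Or.inl hc)
      simpa using this
    · have := key_aux M.trace h (Real.cos t) (Real.sin t) (Or.inr hs)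
      simpa using this
end

section
/- Let K be a symmetric element of SU(2) (K ∈ SU(2) with Kᵀ = K), and let g be a 2×2 complex matrix with det g = 1 such that g·gᵀ ∈ SU(2). Then there exists a real t with det((cos t)·1 − (sin t)·(gᵀ·K·g)) = 0 if and only if g·gᵀ·K = 1 or g·gᵀ·K = −1. Equivalently, for all g with g·gᵀ·K ≠ ±1, the determinant det((cos t)·1 − (sin t)·(gᵀ·K·g)) is nonzero for every real t. -/
open Matrix Complex

lemma su2_adj (V : Matrix (Fin 2) (Fin 2) ℂ)
    (hV : V.conjTranspose * V = 1) (hVd : V.det = 1) :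
    V.conjTranspose = V.adjugate := by
  have h1 : V⁻¹ = V.conjTranspose := Matrix.inv_eq_left_inv hV
  have h2 : V⁻¹ = V.adjugate := by
    rw [Matrix.inv_def, hVd]; simp
  rw [← h1, h2]

lemma su2_classify (V : Matrix (Fin 2) (Fin 2) ℂ)
    (hV : V.conjTranspose * V = 1) (hVd : V.det = 1)
    (htr : V.trace = 2 ∨ V.trace = -2) : V = 1 ∨ V = -1 := by
  have hadj := su2_adj V hV hVd
  have h00 : (starRingEnd ℂ) (V 0 0) = V 1 1 := by
    have := congrFun (congrFun hadj 0) 0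
    simpa [Matrix.conjTranspose_apply, Matrix.adjugate_fin_two] using this
  have h01 : (starRingEnd ℂ) (V 1 0) = -V 0 1 := by
    have := congrFun (congrFun hadj 0) 1
    simpa [Matrix.conjTranspose_apply, Matrix.adjugate_fin_two] using this
  have hnorm : ‖V 0 0‖^2 + ‖V 1 0‖^2 = 1 := by
    have := congrFun (congrFun hV 0) 0
    simp [Matrix.mul_apply, Fin.sum_univ_two, Matrix.conjTranspose_apply,
      Matrix.one_apply, Complex.mul_conj'] at this
    rw [Complex.conj_mul', Complex.conj_mul'] at this
    exact_mod_cast this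
  have htr' : V 0 0 + (starRingEnd ℂ) (V 0 0) = 2 ∨ V 0 0 + (starRingEnd ℂ) (V 0 0) = -2 := by
    rw [Matrix.trace_fin_two, ← h00] at htr; exact htr
  have hre : (V 0 0).re = 1 ∨ (V 0 0).re = -1 := by
    rcases htr' with h | h <;> [left; right] <;>
    · have h2 := congrArg Complex.re h
      simp [Complex.add_re, Complex.conj_re] at h2
      linarith
  have hsq : ‖V 0 0‖^2 = (V 0 0).re^2 + (V 0 0).im^2 := by
    rw [Complex.sq_norm, Complex.normSq_apply]; ring
  have hre2 : ((V 0 0).re)^2 = 1 := by rcases hre with h | h <;> rw [h] <;> ring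
  have him : (V 0 0).im = 0 := by nlinarith [sq_nonneg (V 0 0).im, sq_nonneg ‖V 1 0‖]
  have hb : V 1 0 = 0 := by
    have : ‖V 1 0‖^2 = 0 := by nlinarith
    simpa using pow_eq_zero_iff (n := 2) (by norm_num) |>.mp (by simpa using this)
  have hc : V 0 1 = 0 := by
    have := h01; rw [hb] at this; simpa using this.symm
  rcases hre with h | h
  · left
    have ha : V 0 0 = 1 := Complex.ext (by simp [h]) (by simp [him])
    have hd : V 1 1 = 1 := by rw [← h00, ha]; simp
    ext i j; fin_cases i <;> fin_cases j <;>
      simp [ha, hb, hc, hd, Matrix.one_apply]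
  · right
    have ha : V 0 0 = -1 := Complex.ext (by simp [h]) (by simp [him])
    have hd : V 1 1 = -1 := by rw [← h00, ha]; simp
    ext i j; fin_cases i <;> fin_cases j <;>
      simp [ha, hb, hc, hd, Matrix.one_apply]

lemma su2_trace (V : Matrix (Fin 2) (Fin 2) ℂ)
    (hV : V.conjTranspose * V = 1) (hVd : V.det = 1) :
    ∃ r : ℝ, V.trace = (r : ℂ) ∧ |r| ≤ 2 := by
  have hadj := su2_adj V hV hVd
  have h00 : (starRingEnd ℂ) (V 0 0) = V 1 1 := by
    have := congrFun (congrFun hadj 0) 0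
    simpa [Matrix.conjTranspose_apply, Matrix.adjugate_fin_two] using this
  have hnorm : ‖V 0 0‖^2 + ‖V 1 0‖^2 = 1 := by
    have := congrFun (congrFun hV 0) 0
    simp [Matrix.mul_apply, Fin.sum_univ_two, Matrix.conjTranspose_apply,
      Matrix.one_apply] at this
    rw [Complex.conj_mul', Complex.conj_mul'] at this
    exact_mod_cast this
  refine ⟨2 * (V 0 0).re, ?_, ?_⟩
  · rw [Matrix.trace_fin_two, ← h00, Complex.add_conj]
  · have hsq : ‖V 0 0‖^2 = (V 0 0).re^2 + (V 0 0).im^2 := by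
      rw [Complex.sq_norm, Complex.normSq_apply]; ring
    rw [abs_le]
    constructor <;> nlinarith [sq_nonneg (V 0 0).im, sq_nonneg ‖V 1 0‖,
      sq_nonneg ((V 0 0).re - 1), sq_nonneg ((V 0 0).re + 1)]

/-- Let `K` be a symmetric element of `SU(2)` and let `g` be a `2×2`
complex matrix with `det g = 1` and `g·gᵀ ∈ SU(2)`. Then
`∃ t ∈ ℝ, det((cos t)·1 − (sin t)·(gᵀ·K·g)) = 0` iff `g·gᵀ·K = 1` or `g·gᵀ·K = −1`. -/
theorem stmt_7 (K g : Matrix (Fin 2) (Fin 2) ℂ)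
    (hK1 : K.conjTranspose * K = 1) (hK2 : K.det = 1) (hKsymm : K.transpose = K)
    (hg : g.det = 1)
    (hggt : (g * g.transpose).conjTranspose * (g * g.transpose) = 1) :
    (∃ t : ℝ, ((Real.cos t : ℂ) • (1 : Matrix (Fin 2) (Fin 2) ℂ)
        - (Real.sin t : ℂ) • (g.transpose * K * g)).det = 0) ↔
      (g * g.transpose * K = 1 ∨ g * g.transpose * K = -1) := by
  set M := g.transpose * K * g with hM
  set V := g * g.transpose * K with hVdef
  have hdetM : M.det = 1 := by
    simp [hM, Matrix.det_mul, Matrix.det_transpose, hg, hK2]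
  have hdetM2 : M 0 0 * M 1 1 - M 0 1 * M 1 0 = 1 := by
    rw [← Matrix.det_fin_two]; exact hdetM
  have hVunit : V.conjTranspose * V = 1 := by
    calc V.conjTranspose * V
        = K.conjTranspose * ((g * g.transpose).conjTranspose * (g * g.transpose)) * K := by
          rw [hVdef, Matrix.conjTranspose_mul]; noncomm_ring
      _ = 1 := by rw [hggt, mul_one, hK1]
  have hVdet : V.det = 1 := by
    simp [hVdef, Matrix.det_mul, Matrix.det_transpose, hg, hK2]
  have htr : M.trace = V.trace := by
    rw [hM, hVdef, Matrix.trace_mul_comm, ← mul_assoc]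
  have hform : ∀ t : ℝ, ((Real.cos t : ℂ) • (1 : Matrix (Fin 2) (Fin 2) ℂ)
      - (Real.sin t : ℂ) • M).det
      = 1 - (Real.cos t : ℂ) * (Real.sin t : ℂ) * M.trace := by
    intro t
    have h1 : (Real.cos t : ℂ)^2 + (Real.sin t : ℂ)^2 = 1 := by
      norm_cast; exact Real.cos_sq_add_sin_sq t
    rw [Matrix.det_fin_two, Matrix.trace_fin_two]
    simp only [Matrix.sub_apply, Matrix.smul_apply, smul_eq_mul, Matrix.one_apply_eq,
      Matrix.one_apply_ne (by decide : (0:Fin 2) ≠ 1), Matrix.one_apply_ne (by decide : (1:Fin 2) ≠ 0)]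
    linear_combination (Real.sin t : ℂ)^2 * hdetM2 + h1
  constructor
  · rintro ⟨t, ht⟩
    rw [hform t] at ht
    obtain ⟨r, hr, hrle⟩ := su2_trace V hVunit hVdet
    rw [htr, hr] at ht
    have hre : Real.cos t * Real.sin t * r = 1 := by
      have : ((Real.cos t * Real.sin t * r : ℝ) : ℂ) = 1 := by
        rw [Complex.ofReal_mul, Complex.ofReal_mul]; linear_combination -ht
      exact_mod_cast this
    have hcs : |Real.cos t * Real.sin t| ≤ 1/2 := by
      have h2t := Real.sin_two_mul t
      have := Real.abs_sin_le_one (2 * t)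
      rw [abs_le] at this ⊢
      constructor <;> nlinarith
    have habs : |r| = 2 := by
      have h1 : (1:ℝ) = |Real.cos t * Real.sin t| * |r| := by
        rw [← abs_mul, hre, abs_one]
      have hrpos : |r| ≥ 2 := by nlinarith [abs_nonneg r, abs_nonneg (Real.cos t * Real.sin t)]
      linarith
    have hr2 : r = 2 ∨ r = -2 := by rcases abs_eq (by norm_num : (0:ℝ) ≤ 2) |>.mp habs with h | h
      <;> [left; right] <;> linarith
    apply su2_classify V hVunit hVdet
    rcases hr2 with h | h <;> [left; right] <;> rw [hr, h] <;> norm_num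
  · rintro (h | h)
    · refine ⟨Real.pi / 4, ?_⟩
      rw [hform]
      have : M.trace = 2 := by
        rw [htr, h, Matrix.trace_fin_two]; norm_num [Matrix.one_apply]
      rw [this, Real.cos_pi_div_four, Real.sin_pi_div_four]
      have h2 : (Real.sqrt 2 / 2 : ℝ) * (Real.sqrt 2 / 2) = 1/2 := by
        rw [div_mul_div_comm, Real.mul_self_sqrt (by norm_num)]; norm_num
      have h2c : ((Real.sqrt 2 / 2 : ℝ) : ℂ) * ((Real.sqrt 2 / 2 : ℝ) : ℂ) = 1/2 := by
        rw [← Complex.ofReal_mul, h2]; norm_num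
      rw [h2c]; norm_num
    · refine ⟨-(Real.pi / 4), ?_⟩
      rw [hform]
      have hmt : M.trace = -2 := by
        rw [htr, h, Matrix.trace_fin_two]; norm_num [Matrix.one_apply]
      rw [hmt, Real.cos_neg, Real.sin_neg, Real.cos_pi_div_four, Real.sin_pi_div_four]
      have h2 : (Real.sqrt 2 / 2 : ℝ) * (Real.sqrt 2 / 2) = 1/2 := by
        rw [div_mul_div_comm, Real.mul_self_sqrt (by norm_num)]; norm_num
      have h2c : ((Real.sqrt 2 / 2 : ℝ) : ℂ) * ((Real.sqrt 2 / 2 : ℝ) : ℂ) = 1/2 := by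
        rw [← Complex.ofReal_mul, h2]; norm_num
      push_cast
      ring_nf
      rw [show ((Real.sqrt 2 : ℂ))^2 = 2 by exact_mod_cast congrArg Complex.ofReal (Real.sq_sqrt (by norm_num : (2:ℝ) ≥ 0))]
      ring
end

section
/- Let G be a group and a, b ∈ G elements satisfying a² = b², a² = (a·b)², a⁴ = 1, and a² ≠ 1. Then the subgroup of G generated by {a, b} has exactly 8 elements and is isomorphic to the quaternion group Q₈ of order 8. -/
/-- If `a, b` in a group `G` satisfy `a² = b²`, `a² = (ab)²`, `a⁴ = 1`
and `a² ≠ 1`, then the subgroup generated by `{a, b}` has exactly 8 elements and is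
isomorphic to the quaternion group `Q₈`. -/
theorem stmt_16 (G : Type*) [Group G] (a b : G)
    (h1 : a ^ 2 = b ^ 2) (h2 : a ^ 2 = (a * b) ^ 2)
    (h3 : a ^ 4 = 1) (h4 : a ^ 2 ≠ 1) :
    Nat.card (Subgroup.closure ({a, b} : Set G)) = 8 ∧
      Nonempty ((Subgroup.closure ({a, b} : Set G)) ≃* QuaternionGroup 2) := by
  -- key relations
  have hainv : a⁻¹ = a ^ 3 := by
    refine inv_eq_of_mul_eq_one_right ?_
    rw [← pow_succ']
    exact h3
  have hbinv : b⁻¹ = b * a ^ 2 := by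
    refine inv_eq_of_mul_eq_one_right ?_
    calc b * (b * a ^ 2) = b ^ 2 * a ^ 2 := by rw [← mul_assoc, ← pow_two]
      _ = a ^ 2 * a ^ 2 := by rw [← h1]
      _ = a ^ 4 := by rw [← pow_add]
      _ = 1 := h3
  have hbab : b * (a * b) = a := by
    have h : a * a = a * (b * (a * b)) := by
      calc a * a = a ^ 2 := (pow_two a).symm
        _ = (a * b) ^ 2 := h2
        _ = a * (b * (a * b)) := by rw [pow_two, mul_assoc]
    exact (mul_left_cancel h).symm
  have hcomm : a * b = b * a⁻¹ := by
    calc a * b = b⁻¹ * (b * (a * b)) := (inv_mul_cancel_left b (a * b)).symm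
      _ = b⁻¹ * a := by rw [hbab]
      _ = b * a ^ 2 * a := by rw [hbinv]
      _ = b * a ^ 3 := by rw [mul_assoc, ← pow_succ]
      _ = b * a⁻¹ := by rw [hainv]
  -- a^k * b = b * (a^k)⁻¹
  have hcommn : ∀ k : ℕ, a ^ k * b = b * (a ^ k)⁻¹ := by
    intro k
    induction k with
    | zero => simp
    | succ n ih =>
      calc a ^ (n + 1) * b = a ^ n * (a * b) := by rw [pow_succ, mul_assoc]
        _ = a ^ n * b * a⁻¹ := by rw [hcomm, ← mul_assoc]
        _ = b * (a ^ n)⁻¹ * a⁻¹ := by rw [ih]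
        _ = b * (a ^ (n + 1))⁻¹ := by rw [pow_succ', mul_inv_rev, mul_assoc]
  -- reduce powers mod 4
  have hmod : ∀ k : ℕ, a ^ (k % 4) = a ^ k := by
    intro k
    conv_rhs => rw [← Nat.div_add_mod k 4]
    rw [pow_add, pow_mul, h3, one_pow, one_mul]
  -- the map A : ZMod 4 → G
  set A : ZMod 4 → G := fun i => a ^ i.val with hA
  have hAadd : ∀ i j : ZMod 4, A (i + j) = A i * A j := by
    intro i j
    show a ^ (i + j).val = a ^ i.val * a ^ j.val
    rw [ZMod.val_add, hmod, pow_add]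
  have hAzero : A 0 = 1 := by simp [hA]
  have hAinv : ∀ i : ZMod 4, A (-i) = (A i)⁻¹ := by
    intro i
    have h : A i * A (-i) = 1 := by rw [← hAadd]; simp [hAzero]
    exact (inv_eq_of_mul_eq_one_right h).symm
  have hAb : ∀ i : ZMod 4, A i * b = b * A (-i) := by
    intro i
    rw [hAinv]
    exact hcommn i.val
  have hA2 : A 2 = a ^ 2 := rfl
  have hA1 : A 1 = a := by
    show a ^ (1 : ZMod 4).val = a
    rw [show (1 : ZMod 4).val = 1 from rfl, pow_one]
  -- build the monoid hom f : QuaternionGroup 2 →* G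
  let f : QuaternionGroup 2 →* G :=
    { toFun := fun x => match x with
        | QuaternionGroup.a i => A i
        | QuaternionGroup.xa i => b * A i
      map_one' := hAzero
      map_mul' := by
        rintro (i | i) (j | j)
        · exact hAadd i j
        · show b * A (j - i) = A i * (b * A j)
          calc b * A (j - i) = b * A (-i + j) := by rw [sub_eq_neg_add]
            _ = b * (A (-i) * A j) := by rw [hAadd]
            _ = (b * A (-i)) * A j := by rw [mul_assoc]
            _ = (A i * b) * A j := by rw [hAb]
            _ = A i * (b * A j) := by rw [mul_assoc]
        · show b * A (i + j) = (b * A i) * A j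
          rw [hAadd, mul_assoc]
        · show A ((2 : ℕ) + j - i) = (b * A i) * (b * A j)
          have hc : ((2 : ℕ) : ZMod 4) + j - i = 2 + (-i + j) := by push_cast; ring
          calc A ((2 : ℕ) + j - i) = A (2 + (-i + j)) := by rw [hc]
            _ = A 2 * (A (-i) * A j) := by rw [hAadd, hAadd]
            _ = a ^ 2 * (A (-i) * A j) := by rw [hA2]
            _ = b ^ 2 * (A (-i) * A j) := by rw [h1]
            _ = b * (b * A (-i)) * A j := by simp only [pow_two, mul_assoc]
            _ = b * (A i * b) * A j := by rw [hAb]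
            _ = (b * A i) * (b * A j) := by simp only [mul_assoc] }
  have hfa : ∀ i : ZMod 4, f (QuaternionGroup.a i) = A i := fun _ => rfl
  have hfxa : ∀ i : ZMod 4, f (QuaternionGroup.xa i) = b * A i := fun _ => rfl
  -- injectivity
  have ha1 : a ≠ 1 := fun h => h4 (by rw [h]; simp)
  have ha3 : a ^ 3 ≠ 1 := by
    intro h
    apply ha1
    have h' : a ^ 4 = a * a ^ 3 := pow_succ' a 3
    rw [h', h, mul_one] at h3
    exact h3
  have hinj : Function.Injective f := by
    rw [injective_iff_map_eq_one]
    rintro (i | i) h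
    · rw [hfa] at h
      have hi : a ^ i.val = 1 := h
      have hv : i.val < 4 := i.val_lt
      have hcases : i.val = 0 ∨ i.val = 1 ∨ i.val = 2 ∨ i.val = 3 := by omega
      rcases hcases with h0 | h0 | h0 | h0
      · have : i = 0 := by
          have := (ZMod.val_eq_zero i).mp h0
          exact this
        rw [this]; rfl
      · rw [h0, pow_one] at hi; exact absurd hi ha1
      · rw [h0] at hi; exact absurd hi h4
      · rw [h0] at hi; exact absurd hi ha3
    · rw [hfxa] at h
      exfalso
      have hb : b = (A i)⁻¹ := eq_inv_of_mul_eq_one_left h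
      have hba : b * a = a * b := by
        rw [hb]
        exact (((Commute.refl a).pow_right i.val).inv_right).eq.symm
      have h' : b * a = b * a⁻¹ := by rw [hba]; exact hcomm
      have h'' : a = a⁻¹ := mul_left_cancel h'
      apply h4
      rw [pow_two]
      nth_rewrite 2 [h'']
      exact mul_inv_cancel a
  -- range = closure {a, b}
  have hrange : f.range = Subgroup.closure ({a, b} : Set G) := by
    apply le_antisymm
    · rintro x ⟨(i | i), rfl⟩
      · rw [hfa]
        exact pow_mem (Subgroup.subset_closure (by simp)) i.val
      · rw [hfxa]
        exact mul_mem (Subgroup.subset_closure (by simp))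
          (pow_mem (Subgroup.subset_closure (by simp)) i.val)
    · rw [Subgroup.closure_le]
      rintro x (rfl | rfl)
      · exact ⟨QuaternionGroup.a 1, by rw [hfa, hA1]⟩
      · exact ⟨QuaternionGroup.xa 0, by rw [hfxa, hAzero, mul_one]⟩
  -- conclude
  have e1 : QuaternionGroup 2 ≃* f.range := MonoidHom.ofInjective hinj
  have e2 : f.range ≃* Subgroup.closure ({a, b} : Set G) := MulEquiv.subgroupCongr hrange
  have ecard : Nat.card (Subgroup.closure ({a, b} : Set G)) = 8 := by
    rw [← Nat.card_congr (e1.trans e2).toEquiv]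
    simp [Nat.card_eq_fintype_card, QuaternionGroup.card]
  exact ⟨ecard, ⟨(e1.trans e2).symm⟩⟩
end

section
/- Fix a nonzero scalar ħ ∈ ℂ. For a symmetric 2×2 complex matrix K, define a product on the polynomial ring ℂ[u₁, u₂] by f ∗_K g := Σ_{m≥0} (1/m!)(iħ/2)^m Σ_{i₁,…,i_m, j₁,…,j_m ∈ {1,2}} (Π_a Λ_{i_a j_a}) (∂_{i₁}⋯∂_{i_m} f)·(∂_{j₁}⋯∂_{j_m} g), where Λ = K + J and J = [[0, −1], [1, 0]] (the sum is finite on polynomials). For two symmetric matrices K, K', define the intertwiner I_K^{K'} := Σ_{m≥0} (1/m!)(iħ/4)^m (Σ_{i,j} (K'−K)_{ij} ∂_i ∂_j)^m, a well-defined ℂ-linear map on ℂ[u₁, u₂]. Then for all polynomials f, g: I_K^{K'}(f ∗_K g) = (I_K^{K'} f) ∗_{K'} (I_K^{K'} g); that is, I_K^{K'} is an algebra isomorphism from (ℂ[u₁,u₂], ∗_K) to (ℂ[u₁,u₂], ∗_{K'}). -/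
set_option maxHeartbeats 1600000


open MvPolynomial

/-- The partial derivative `∂ᵢ` on `ℂ[u₁,u₂]`, as an endomorphism. -/
noncomputable def pEnd (i : Fin 2) : Module.End ℂ (MvPolynomial (Fin 2) ℂ) :=
  (MvPolynomial.pderiv i).toLinearMap

/-- The composition `∂_{v 0} ∘ ⋯ ∘ ∂_{v (m−1)}` of partial derivatives. -/
noncomputable def derivs {m : ℕ} (v : Fin m → Fin 2) :
    Module.End ℂ (MvPolynomial (Fin 2) ℂ) :=
  (List.ofFn fun a => pEnd (v a)).prod

/-- The `m`-th term `(1/m!)(iħ/2)^m Σ_{i,j} (Π_a Λ_{i_a j_a})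
(∂_{i₁}⋯∂_{i_m} f)·(∂_{j₁}⋯∂_{j_m} g)` of the `K`-ordered star product,
with `Λ = K + J`; here `hb` stands for `ħ` and `Lam` for `Λ`. -/
noncomputable def starTerm (hb : ℂ) (Lam : Matrix (Fin 2) (Fin 2) ℂ) (m : ℕ)
    (f g : MvPolynomial (Fin 2) ℂ) : MvPolynomial (Fin 2) ℂ :=
  ((m.factorial : ℂ)⁻¹ * (Complex.I * hb / 2) ^ m) •
    ∑ i : Fin m → Fin 2, ∑ j : Fin m → Fin 2,
      (∏ a, Lam (i a) (j a)) • (derivs i f * derivs j g)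

/-- The star product `f ∗_K g = Σ_{m ≥ 0} starTerm hb Λ m f g`; the sum is finite on
polynomials, since all terms with `m > totalDegree f` vanish (an `m`-fold derivative
of `f` is then zero), so it is given by the finite partial sum below. -/
noncomputable def starK (hb : ℂ) (Lam : Matrix (Fin 2) (Fin 2) ℂ)
    (f g : MvPolynomial (Fin 2) ℂ) : MvPolynomial (Fin 2) ℂ :=
  ∑ m ∈ Finset.range (f.totalDegree + 1), starTerm hb Lam m f g

/-- The matrix `J = [[0, −1], [1, 0]]`. -/
def matJ : Matrix (Fin 2) (Fin 2) ℂ := !![0, -1; 1, 0]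

/-- The second-order operator `Σ_{i,j} A_{ij} ∂_i ∂_j`. -/
noncomputable def twistOp (A : Matrix (Fin 2) (Fin 2) ℂ) :
    Module.End ℂ (MvPolynomial (Fin 2) ℂ) :=
  ∑ i : Fin 2, ∑ j : Fin 2, A i j • (pEnd i * pEnd j)

/-- The intertwiner `I_K^{K'} = exp((iħ/4) Σ_{i,j} (K'−K)_{ij} ∂_i ∂_j)`; the
exponential series is finite on each polynomial (terms with `2m > totalDegree f`
vanish), so it is given by the finite partial sum below. -/
noncomputable def intertwiner (hb : ℂ) (K K' : Matrix (Fin 2) (Fin 2) ℂ)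
    (f : MvPolynomial (Fin 2) ℂ) : MvPolynomial (Fin 2) ℂ :=
  ∑ m ∈ Finset.range (f.totalDegree + 1),
    ((m.factorial : ℂ)⁻¹ * (Complex.I * hb / 4) ^ m) • ((twistOp (K' - K)) ^ m) f

namespace Stmt17

variable {σ : Type*} [DecidableEq σ]

/-- `L` strictly lowers total degree (or kills). -/
def Lowers (L : Module.End ℂ (MvPolynomial σ ℂ)) : Prop :=
  ∀ p, L p = 0 ∨ (L p).totalDegree + 1 ≤ p.totalDegree

theorem lowers_pderiv (i : σ) :
    Lowers ((pderiv i).toLinearMap : Module.End ℂ (MvPolynomial σ ℂ)) := by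
  intro p
  rcases Nat.eq_zero_or_pos p.totalDegree with h0 | hpos
  · left
    show pderiv i p = 0
    conv_lhs => rw [p.as_sum]
    rw [map_sum]
    refine Finset.sum_eq_zero fun v hv => ?_
    have hvi : v i = 0 := (totalDegree_eq_zero_iff σ p).1 h0 v hv i
    rw [pderiv_monomial, hvi]
    simp
  · right
    show (pderiv i p).totalDegree + 1 ≤ p.totalDegree
    have hb : (pderiv i p).totalDegree ≤ p.totalDegree - 1 := by
      conv_lhs => rw [p.as_sum]
      rw [map_sum]
      refine totalDegree_finsetSum_le fun v hv => ?_
      rw [pderiv_monomial]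
      by_cases hvi : v i = 0
      · rw [hvi]; simp
      · refine (totalDegree_monomial_le _ _).trans ?_
        have hle : Finsupp.single i 1 ≤ v := by
          rw [Finsupp.single_le_iff]; omega
        have hsum : ((v - Finsupp.single i 1).sum fun _ e => e) + 1 = v.sum fun _ e => e := by
          conv_rhs => rw [← tsub_add_cancel_of_le hle]
          rw [Finsupp.sum_add_index' (fun _ => rfl) (fun _ _ _ => rfl),
            Finsupp.sum_single_index rfl]
        have hvp : (v.sum fun _ e => e) ≤ p.totalDegree := le_totalDegree hv
        have : ((v - Finsupp.single i 1).sum fun _ ↦ id) =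
            ((v - Finsupp.single i 1).sum fun _ e => e) := rfl
        omega
    omega

theorem Lowers.zero : Lowers (0 : Module.End ℂ (MvPolynomial σ ℂ)) := fun p => Or.inl rfl

theorem Lowers.add {L M : Module.End ℂ (MvPolynomial σ ℂ)} (hL : Lowers L) (hM : Lowers M) :
    Lowers (L + M) := by
  intro p
  rcases hL p with h1 | h1 <;> rcases hM p with h2 | h2
  · left; simp [LinearMap.add_apply, h1, h2]
  · right; simpa [LinearMap.add_apply, h1] using h2
  · right; simpa [LinearMap.add_apply, h2] using h1
  · right
    have := totalDegree_add (L p) (M p)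
    simp only [LinearMap.add_apply]
    omega

theorem Lowers.smul {L : Module.End ℂ (MvPolynomial σ ℂ)} (c : ℂ) (hL : Lowers L) :
    Lowers (c • L) := by
  intro p
  rcases hL p with h | h
  · left; simp [h]
  · right
    have := totalDegree_smul_le c (L p)
    simp only [LinearMap.smul_apply]
    omega

theorem Lowers.mul {L M : Module.End ℂ (MvPolynomial σ ℂ)} (hL : Lowers L) (hM : Lowers M) :
    Lowers (L * M) := by
  intro p
  rcases hM p with h | h
  · left; simp [Module.End.mul_apply, h]
  · rcases hL (M p) with h2 | h2
    · left; simp [Module.End.mul_apply, h2]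
    · right; rw [Module.End.mul_apply]; omega

theorem Lowers.sum {ι : Type*} (s : Finset ι) (F : ι → Module.End ℂ (MvPolynomial σ ℂ))
    (h : ∀ i ∈ s, Lowers (F i)) : Lowers (∑ i ∈ s, F i) := by
  classical
  induction s using Finset.induction_on with
  | empty => simpa using Lowers.zero
  | insert _ _ hx ih =>
    rw [Finset.sum_insert hx]
    exact (h _ (Finset.mem_insert_self _ _)).add
      (ih fun i hi => h i (Finset.mem_insert_of_mem hi))

theorem Lowers.pow_apply {L : Module.End ℂ (MvPolynomial σ ℂ)} (hL : Lowers L) (m : ℕ)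
    (p : MvPolynomial σ ℂ) :
    (L ^ m) p = 0 ∨ ((L ^ m) p).totalDegree + m ≤ p.totalDegree := by
  induction m generalizing p with
  | zero => right; simp
  | succ n ih =>
    rw [pow_succ, Module.End.mul_apply]
    rcases hL p with h | h
    · left; rw [h, map_zero]
    · rcases ih (L p) with h2 | h2
      · left; exact h2
      · right; omega

theorem Lowers.pow_eq_zero {L : Module.End ℂ (MvPolynomial σ ℂ)} (hL : Lowers L) {m : ℕ}
    {p : MvPolynomial σ ℂ} (h : p.totalDegree < m) : (L ^ m) p = 0 := by
  rcases hL.pow_apply m p with h2 | h2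
  · exact h2
  · omega

theorem Lowers.deg_le {L : Module.End ℂ (MvPolynomial σ ℂ)} (hL : Lowers L)
    (p : MvPolynomial σ ℂ) : (L p).totalDegree ≤ p.totalDegree := by
  rcases hL p with h | h
  · simp [h]
  · omega

theorem pderiv_comm (a b : σ) (p : MvPolynomial σ ℂ) :
    pderiv a (pderiv b p) = pderiv b (pderiv a p) := by
  induction p using MvPolynomial.induction_on' with
  | monomial s c =>
    rcases eq_or_ne a b with rfl | hab
    · rfl
    · simp only [pderiv_monomial]
      have h1 : (s - Finsupp.single b 1 : _ →₀ ℕ) a = s a := by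
        rw [Finsupp.tsub_apply, Finsupp.single_eq_of_ne hab, Nat.sub_zero]
      have h2 : (s - Finsupp.single a 1 : _ →₀ ℕ) b = s b := by
        rw [Finsupp.tsub_apply, Finsupp.single_eq_of_ne hab.symm, Nat.sub_zero]
      rw [h1, h2, tsub_tsub, tsub_tsub, add_comm (Finsupp.single b 1)]
      ring_nf
  | add p q hp hq => simp [hp, hq]


/-- truncated exponential -/
noncomputable def E1 (L : Module.End ℂ (MvPolynomial σ ℂ)) (N : ℕ) :
    Module.End ℂ (MvPolynomial σ ℂ) :=
  ∑ m ∈ Finset.range N, ((m.factorial : ℂ)⁻¹) • L ^ m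

theorem E1_apply (L : Module.End ℂ (MvPolynomial σ ℂ)) (N : ℕ) (p : MvPolynomial σ ℂ) :
    E1 L N p = ∑ m ∈ Finset.range N, ((m.factorial : ℂ)⁻¹) • (L ^ m) p := by
  simp [E1, LinearMap.sum_apply]

theorem E1_smul_apply (c : ℂ) (L : Module.End ℂ (MvPolynomial σ ℂ)) (N : ℕ)
    (p : MvPolynomial σ ℂ) :
    E1 (c • L) N p = ∑ m ∈ Finset.range N, ((m.factorial : ℂ)⁻¹ * c ^ m) • (L ^ m) p := by
  rw [E1_apply]
  refine Finset.sum_congr rfl fun m _ => ?_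
  rw [smul_pow, LinearMap.smul_apply, smul_smul]

theorem E1_deg {L : Module.End ℂ (MvPolynomial σ ℂ)} (hL : Lowers L) (N : ℕ)
    (p : MvPolynomial σ ℂ) : (E1 L N p).totalDegree ≤ p.totalDegree := by
  rw [E1_apply]
  refine totalDegree_finsetSum_le fun m _ => ?_
  refine (totalDegree_smul_le _ _).trans ?_
  rcases hL.pow_apply m p with h | h
  · simp [h]
  · omega

theorem E1_zero_op {N : ℕ} (hN : 0 < N) (p : MvPolynomial σ ℂ) :
    E1 (0 : Module.End ℂ (MvPolynomial σ ℂ)) N p = p := by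
  rw [E1_apply]
  rw [Finset.sum_eq_single_of_mem 0 (Finset.mem_range.2 hN)]
  · simp
  · intro m _ hm
    rw [zero_pow hm]
    simp

theorem sum_triangle {M : Type*} [AddCommMonoid M] (F : ℕ → ℕ → M) (N : ℕ)
    (hF0 : ∀ k l, N ≤ k + l → F k l = 0) :
    ∑ m ∈ Finset.range N, ∑ k ∈ Finset.range (m + 1), F k (m - k)
      = ∑ k ∈ Finset.range N, ∑ l ∈ Finset.range N, F k l := by
  have h1 : ∑ m ∈ Finset.range N, ∑ k ∈ Finset.range (m + 1), F k (m - k)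
      = ∑ x ∈ (Finset.range N).sigma (fun m => Finset.range (m + 1)),
          F x.2 (x.1 - x.2) := by
    rw [Finset.sum_sigma]
  have h2 : ∑ x ∈ (Finset.range N ×ˢ Finset.range N), F x.1 x.2
      = ∑ k ∈ Finset.range N, ∑ l ∈ Finset.range N, F k l :=
    by rw [Finset.sum_product']
  rw [h1, ← h2]
  have h3 : ∑ x ∈ (Finset.range N ×ˢ Finset.range N).filter (fun x => x.1 + x.2 < N),
        F x.1 x.2 = ∑ x ∈ (Finset.range N ×ˢ Finset.range N), F x.1 x.2 :=
    Finset.sum_filter_of_ne (fun x _ hx => by by_contra hc; exact hx (hF0 _ _ (by omega)))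
  rw [← h3]
  refine Finset.sum_nbij' (i := fun x => (x.2, x.1 - x.2)) (j := fun y => ⟨y.1 + y.2, y.1⟩)
    ?_ ?_ ?_ ?_ ?_
  · rintro ⟨m, k⟩ hm
    simp only [Finset.mem_sigma, Finset.mem_range, Finset.mem_filter, Finset.mem_product] at hm ⊢
    omega
  · rintro ⟨k, l⟩ hk
    simp only [Finset.mem_sigma, Finset.mem_range, Finset.mem_filter, Finset.mem_product] at hk ⊢
    omega
  · rintro ⟨m, k⟩ hm
    simp only [Finset.mem_sigma, Finset.mem_range] at hm
    simp only [Sigma.mk.inj_iff]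
    exact ⟨by omega, heq_of_eq rfl⟩
  · rintro ⟨k, l⟩ hk
    simp only [Finset.mem_filter, Finset.mem_product, Finset.mem_range] at hk
    simp only [Prod.mk.injEq]
    exact ⟨trivial, by omega⟩
  · rintro ⟨m, k⟩ hm
    rfl

/-- exp of a sum of commuting lowering operators -/
theorem expAdd {A B : Module.End ℂ (MvPolynomial σ ℂ)} (hAB : Commute A B)
    (hA : Lowers A) (hB : Lowers B) {p : MvPolynomial σ ℂ} {N : ℕ}
    (hN : p.totalDegree < N) :
    E1 (A + B) N p = E1 A N (E1 B N p) := by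
  have hF0 : ∀ k l, N ≤ k + l →
      (((k.factorial : ℂ)⁻¹ * (l.factorial : ℂ)⁻¹) • (A ^ k) ((B ^ l) p)) = 0 := by
    intro k l hkl
    rcases hB.pow_apply l p with h | h
    · rw [h, map_zero, smul_zero]
    · rw [hA.pow_eq_zero (by omega), smul_zero]
  calc E1 (A + B) N p
      = ∑ m ∈ Finset.range N, ∑ k ∈ Finset.range (m + 1),
          (((k.factorial : ℂ)⁻¹ * ((m - k).factorial : ℂ)⁻¹) •
            (A ^ k) ((B ^ (m - k)) p)) := by
        rw [E1_apply]
        refine Finset.sum_congr rfl fun m _ => ?_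
        rw [hAB.add_pow, LinearMap.sum_apply, Finset.smul_sum]
        refine Finset.sum_congr rfl fun k hk => ?_
        have hkm : k ≤ m := by simpa using Nat.lt_succ_iff.mp (Finset.mem_range.1 hk)
        simp only [Module.End.mul_apply, Module.End.natCast_apply, map_nsmul]
        rw [← Nat.cast_smul_eq_nsmul ℂ, smul_smul]
        congr 1
        rw [Nat.cast_choose ℂ hkm]
        have h1 : (m.factorial : ℂ) ≠ 0 := Nat.cast_ne_zero.2 (Nat.factorial_ne_zero m)
        have h2 : (k.factorial : ℂ) ≠ 0 := Nat.cast_ne_zero.2 (Nat.factorial_ne_zero k)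
        have h3 : ((m - k).factorial : ℂ) ≠ 0 := Nat.cast_ne_zero.2 (Nat.factorial_ne_zero _)
        field_simp
    _ = ∑ k ∈ Finset.range N, ∑ l ∈ Finset.range N,
          (((k.factorial : ℂ)⁻¹ * (l.factorial : ℂ)⁻¹) • (A ^ k) ((B ^ l) p)) :=
        sum_triangle _ N hF0
    _ = E1 A N (E1 B N p) := by
        symm
        rw [E1_apply]
        refine Finset.sum_congr rfl fun k _ => ?_
        rw [E1_apply, map_sum, Finset.smul_sum]
        refine Finset.sum_congr rfl fun l _ => ?_
        rw [map_smul, smul_smul]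

abbrev PA := MvPolynomial (Fin 2) ℂ
abbrev PR := MvPolynomial (Fin 2 ⊕ Fin 2) ℂ

noncomputable def pE2 (i : Fin 2 ⊕ Fin 2) : Module.End ℂ PR := (pderiv i).toLinearMap

noncomputable def mu : PR →ₐ[ℂ] PA := rename (Sum.elim id id)

noncomputable def box (f g : PA) : PR := rename Sum.inl f * rename Sum.inr g

noncomputable def opM (A : Matrix (Fin 2) (Fin 2) ℂ) (s t : Fin 2 → Fin 2 ⊕ Fin 2) :
    Module.End ℂ PR := ∑ i, ∑ j, A i j • (pE2 (s i) * pE2 (t j))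

theorem pE2_apply (a : Fin 2 ⊕ Fin 2) (q : PR) : pE2 a q = pderiv a q := rfl

theorem pEnd_apply' (a : Fin 2) (q : PA) : pEnd a q = pderiv a q := rfl

theorem mu_box (f g : PA) : mu (box f g) = f * g := by
  rw [box, mu, map_mul]
  have h1 : (rename (Sum.elim id id)) ((rename (Sum.inl : Fin 2 → Fin 2 ⊕ Fin 2)) f) = f := by
    rw [rename_rename]
    simp [rename_id]
  have h2 : (rename (Sum.elim id id)) ((rename (Sum.inr : Fin 2 → Fin 2 ⊕ Fin 2)) g) = g := by
    rw [rename_rename]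
    simp [rename_id]
  rw [h1, h2]

theorem pderiv_rename_inr_eq_zero (i : Fin 2) (g : PA) :
    pderiv (Sum.inl i) ((rename (Sum.inr : Fin 2 → Fin 2 ⊕ Fin 2)) g) = 0 := by
  refine pderiv_eq_zero_of_notMem_vars fun h => ?_
  have := vars_rename (Sum.inr : Fin 2 → Fin 2 ⊕ Fin 2) g h
  simp only [Finset.mem_image] at this
  obtain ⟨x, -, hx⟩ := this
  exact nomatch hx

theorem pderiv_rename_inl_eq_zero (i : Fin 2) (g : PA) :
    pderiv (Sum.inr i) ((rename (Sum.inl : Fin 2 → Fin 2 ⊕ Fin 2)) g) = 0 := by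
  refine pderiv_eq_zero_of_notMem_vars fun h => ?_
  have := vars_rename (Sum.inl : Fin 2 → Fin 2 ⊕ Fin 2) g h
  simp only [Finset.mem_image] at this
  obtain ⟨x, -, hx⟩ := this
  exact nomatch hx

theorem pderiv_inl_box (i : Fin 2) (f g : PA) :
    pderiv (Sum.inl i) (box f g) = box (pderiv i f) g := by
  rw [box, box, pderiv_mul, pderiv_rename_inr_eq_zero, mul_zero, add_zero,
    pderiv_rename Sum.inl_injective]

theorem pderiv_inr_box (i : Fin 2) (f g : PA) :
    pderiv (Sum.inr i) (box f g) = box f (pderiv i g) := by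
  rw [box, box, pderiv_mul, pderiv_rename_inl_eq_zero, zero_mul, zero_add,
    pderiv_rename Sum.inr_injective]

theorem box_smul_left (c : ℂ) (f g : PA) : box (c • f) g = c • box f g := by
  rw [box, box, map_smul, smul_mul_assoc]

theorem box_smul_right (c : ℂ) (f g : PA) : box f (c • g) = c • box f g := by
  rw [box, box, map_smul, mul_smul_comm]

theorem box_sum_left {ι : Type*} (s : Finset ι) (F : ι → PA) (g : PA) :
    box (∑ i ∈ s, F i) g = ∑ i ∈ s, box (F i) g := by
  rw [box, map_sum, Finset.sum_mul]
  rfl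

theorem box_sum_right {ι : Type*} (s : Finset ι) (F : ι → PA) (g : PA) :
    box g (∑ i ∈ s, F i) = ∑ i ∈ s, box g (F i) := by
  rw [box, map_sum, Finset.mul_sum]
  rfl

theorem opM_box_mix (A : Matrix (Fin 2) (Fin 2) ℂ) (a b : PA) :
    opM A Sum.inl Sum.inr (box a b)
      = ∑ i, ∑ j, A i j • box (pderiv i a) (pderiv j b) := by
  rw [opM, LinearMap.sum_apply]
  refine Finset.sum_congr rfl fun i _ => ?_
  rw [LinearMap.sum_apply]
  refine Finset.sum_congr rfl fun j _ => ?_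
  rw [LinearMap.smul_apply, Module.End.mul_apply]
  congr 1
  rw [pE2, pE2]
  show pderiv (Sum.inl i) (pderiv (Sum.inr j) (box a b)) = _
  rw [pderiv_inr_box, pderiv_inl_box]


theorem opM_box_left (A : Matrix (Fin 2) (Fin 2) ℂ) (a b : PA) :
    opM A Sum.inl Sum.inl (box a b) = box (twistOp A a) b := by
  rw [opM, twistOp]
  simp only [LinearMap.sum_apply, LinearMap.smul_apply, Module.End.mul_apply, box_sum_left,
    box_smul_left]
  refine Finset.sum_congr rfl fun i _ => Finset.sum_congr rfl fun j _ => ?_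
  congr 1
  show pderiv (Sum.inl i) (pderiv (Sum.inl j) (box a b)) = _
  rw [pderiv_inl_box, pderiv_inl_box]
  rfl

theorem opM_box_right (A : Matrix (Fin 2) (Fin 2) ℂ) (a b : PA) :
    opM A Sum.inr Sum.inr (box a b) = box a (twistOp A b) := by
  rw [opM, twistOp]
  simp only [LinearMap.sum_apply, LinearMap.smul_apply, Module.End.mul_apply, box_sum_right,
    box_smul_right]
  refine Finset.sum_congr rfl fun i _ => Finset.sum_congr rfl fun j _ => ?_
  congr 1
  show pderiv (Sum.inr i) (pderiv (Sum.inr j) (box a b)) = _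
  rw [pderiv_inr_box, pderiv_inr_box]
  rfl

theorem lowers_opM (A : Matrix (Fin 2) (Fin 2) ℂ) (s t : Fin 2 → Fin 2 ⊕ Fin 2) :
    Lowers (opM A s t) := by
  refine Lowers.sum _ _ fun i _ => Lowers.sum _ _ fun j _ => ?_
  exact ((lowers_pderiv (s i)).mul (lowers_pderiv (t j))).smul _

theorem lowers_twistOp (A : Matrix (Fin 2) (Fin 2) ℂ) : Lowers (twistOp A) := by
  refine Lowers.sum _ _ fun i _ => Lowers.sum _ _ fun j _ => ?_
  exact ((lowers_pderiv i).mul (lowers_pderiv j)).smul _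

theorem commute_pE2 (a b : Fin 2 ⊕ Fin 2) : Commute (pE2 a) (pE2 b) := by
  refine LinearMap.ext fun p => ?_
  show pderiv a (pderiv b p) = pderiv b (pderiv a p)
  exact pderiv_comm a b p

theorem commute_opM (A B : Matrix (Fin 2) (Fin 2) ℂ) (s t s' t' : Fin 2 → Fin 2 ⊕ Fin 2) :
    Commute (opM A s t) (opM B s' t') := by
  refine Commute.sum_left _ _ _ fun i _ => Commute.sum_left _ _ _ fun j _ => ?_
  refine Commute.sum_right _ _ _ fun k _ => Commute.sum_right _ _ _ fun l _ => ?_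
  refine ((Commute.smul_left ?_ _).smul_right _)
  refine Commute.mul_left ?_ ?_ <;> refine Commute.mul_right ?_ ?_ <;> exact commute_pE2 _ _

/-- matrix linearity of opM -/
theorem opM_add (A B : Matrix (Fin 2) (Fin 2) ℂ) (s t : Fin 2 → Fin 2 ⊕ Fin 2) :
    opM (A + B) s t = opM A s t + opM B s t := by
  rw [opM, opM, opM, ← Finset.sum_add_distrib]
  refine Finset.sum_congr rfl fun i _ => ?_
  rw [← Finset.sum_add_distrib]
  refine Finset.sum_congr rfl fun j _ => ?_
  rw [Matrix.add_apply, add_smul]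

theorem twistOp_neg (A : Matrix (Fin 2) (Fin 2) ℂ) : twistOp (-A) = -twistOp A := by
  rw [twistOp, twistOp, ← Finset.sum_neg_distrib]
  refine Finset.sum_congr rfl fun i _ => ?_
  rw [← Finset.sum_neg_distrib]
  refine Finset.sum_congr rfl fun j _ => ?_
  rw [Matrix.neg_apply]
  exact neg_smul (A i j) (pEnd i * pEnd j)

/-- the chain rule for mu -/
theorem chain (j : Fin 2) (p : PR) :
    pderiv j (mu p) = mu (pderiv (Sum.inl j) p) + mu (pderiv (Sum.inr j) p) := by
  induction p using MvPolynomial.induction_on with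
  | C a => simp [pderiv_C]
  | add p q hp hq => simp only [map_add, pderiv_C] at *; rw [hp, hq]; ring
  | mul_X p k ih =>
    have hmu : ∀ q : PR, mu q = rename (Sum.elim id id) q := fun _ => rfl
    have hX : mu (X k) = X (Sum.elim id id k) := by rw [hmu, rename_X]
    rw [map_mul, hX, pderiv_mul, ih, pderiv_mul, pderiv_mul, map_add, map_add, map_mul,
      map_mul, map_mul, map_mul, hX]
    have hXd : pderiv j (X (Sum.elim id id k) : PA)
        = mu (pderiv (Sum.inl j) (X k)) + mu (pderiv (Sum.inr j) (X k)) := by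
      cases k with
      | inl k' =>
        rcases eq_or_ne j k' with rfl | hj
        · simp [hmu]
        · simp [pderiv_X_of_ne (show k' ≠ j from hj.symm),
            pderiv_X_of_ne (show Sum.inl k' ≠ Sum.inl j by simp [hj.symm])]
      | inr k' =>
        rcases eq_or_ne j k' with rfl | hj
        · simp [hmu]
        · simp [pderiv_X_of_ne (show k' ≠ j from hj.symm),
            pderiv_X_of_ne (show Sum.inr k' ≠ Sum.inr j by simp [hj.symm])]
    rw [hXd]
    ring

/-- the operator M on the doubled algebra -/
noncomputable def bigM (S : Matrix (Fin 2) (Fin 2) ℂ) : Module.End ℂ PR :=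
  opM S Sum.inl Sum.inl + opM S Sum.inr Sum.inr + (2 : ℂ) • opM S Sum.inl Sum.inr

theorem twist_mu {S : Matrix (Fin 2) (Fin 2) ℂ} (hS : S.IsSymm) (p : PR) :
    twistOp S (mu p) = mu (bigM S p) := by
  have hquad : ∀ i j : Fin 2, (pEnd i * pEnd j) (mu p)
      = mu ((pE2 (Sum.inl i) * pE2 (Sum.inl j)) p) + mu ((pE2 (Sum.inr i) * pE2 (Sum.inl j)) p)
        + (mu ((pE2 (Sum.inl i) * pE2 (Sum.inr j)) p)
            + mu ((pE2 (Sum.inr i) * pE2 (Sum.inr j)) p)) := by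
    intro i j
    rw [Module.End.mul_apply, pEnd_apply', pEnd_apply', chain j p, map_add, chain i, chain i]
    simp only [Module.End.mul_apply, pE2_apply]
  have hmuop : ∀ (s t : Fin 2 → Fin 2 ⊕ Fin 2), mu (opM S s t p)
      = ∑ i : Fin 2, ∑ j : Fin 2, S i j • mu ((pE2 (s i) * pE2 (t j)) p) := by
    intro s t
    rw [opM, LinearMap.sum_apply, map_sum]
    refine Finset.sum_congr rfl fun i _ => ?_
    rw [LinearMap.sum_apply, map_sum]
    refine Finset.sum_congr rfl fun j _ => ?_
    rw [LinearMap.smul_apply, map_smul]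
  have hswap : ∑ i : Fin 2, ∑ j : Fin 2, S i j • mu ((pE2 (Sum.inr i) * pE2 (Sum.inl j)) p)
      = ∑ i : Fin 2, ∑ j : Fin 2, S i j • mu ((pE2 (Sum.inl i) * pE2 (Sum.inr j)) p) := by
    rw [Finset.sum_comm]
    refine Finset.sum_congr rfl fun i _ => Finset.sum_congr rfl fun j _ => ?_
    rw [hS.apply i j]
    rw [Module.End.mul_apply, Module.End.mul_apply, pE2_apply, pE2_apply, pE2_apply, pE2_apply,
      pderiv_comm]
  have hL : twistOp S (mu p)
      = (∑ i : Fin 2, ∑ j : Fin 2, S i j • mu ((pE2 (Sum.inl i) * pE2 (Sum.inl j)) p))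
        + (∑ i : Fin 2, ∑ j : Fin 2, S i j • mu ((pE2 (Sum.inr i) * pE2 (Sum.inl j)) p))
        + ((∑ i : Fin 2, ∑ j : Fin 2, S i j • mu ((pE2 (Sum.inl i) * pE2 (Sum.inr j)) p))
            + (∑ i : Fin 2, ∑ j : Fin 2, S i j • mu ((pE2 (Sum.inr i) * pE2 (Sum.inr j)) p))) := by
    rw [twistOp, LinearMap.sum_apply, ← Finset.sum_add_distrib, ← Finset.sum_add_distrib,
      ← Finset.sum_add_distrib]
    refine Finset.sum_congr rfl fun i _ => ?_
    rw [LinearMap.sum_apply, ← Finset.sum_add_distrib, ← Finset.sum_add_distrib,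
      ← Finset.sum_add_distrib]
    refine Finset.sum_congr rfl fun j _ => ?_
    rw [LinearMap.smul_apply, hquad i j, smul_add, smul_add, smul_add]
  rw [hL, hswap]
  have hR : mu (bigM S p) = mu (opM S Sum.inl Sum.inl p) + mu (opM S Sum.inr Sum.inr p)
      + (2 : ℂ) • mu (opM S Sum.inl Sum.inr p) := by
    rw [bigM]
    simp only [LinearMap.add_apply, LinearMap.smul_apply, map_add, map_smul]
  rw [hR, hmuop, hmuop, hmuop, two_smul]
  abel

theorem E1_comm_mu {T : Module.End ℂ PA} {M : Module.End ℂ PR}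
    (h : ∀ p, T (mu p) = mu (M p)) (c : ℂ) (N : ℕ) (p : PR) :
    E1 (c • T) N (mu p) = mu (E1 (c • M) N p) := by
  have hpow : ∀ m q, ((c • T) ^ m) (mu q) = mu (((c • M) ^ m) q) := by
    intro m
    induction m with
    | zero => intro q; simp
    | succ n ih =>
      intro q
      rw [pow_succ', pow_succ', Module.End.mul_apply, Module.End.mul_apply, ih,
        LinearMap.smul_apply, LinearMap.smul_apply, h, map_smul]
  rw [E1_apply, E1_apply, map_sum]
  refine Finset.sum_congr rfl fun m _ => ?_
  rw [map_smul, hpow]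

/-- derivs basic facts -/
theorem derivs_nil (v : Fin 0 → Fin 2) : derivs v = 1 := by
  rw [derivs, List.ofFn_zero, List.prod_nil]

theorem derivs_snoc {m : ℕ} (v : Fin m → Fin 2) (x : Fin 2) :
    derivs (Fin.snoc v x) = derivs v * pEnd x := by
  have h : (fun i : Fin m => pEnd ((Fin.snoc v x : Fin (m+1) → Fin 2) (Fin.castSucc i))) = fun a => pEnd (v a) := by
    funext a
    rw [Fin.snoc_castSucc]
  rw [derivs, List.ofFn_succ', List.concat_eq_append, List.prod_append, Fin.snoc_last,
    List.prod_cons, List.prod_nil, mul_one, derivs, h]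

theorem derivs_bound : ∀ {m : ℕ} (v : Fin m → Fin 2) (f : PA),
    derivs v f = 0 ∨ (derivs v f).totalDegree + m ≤ f.totalDegree := by
  intro m
  induction m with
  | zero => intro v f; right; rw [derivs_nil]; simp
  | succ n ih =>
    intro v f
    have hv : derivs v = derivs (Fin.init v) * pEnd (v (Fin.last n)) := by
      conv_lhs => rw [← Fin.snoc_init_self v]
      rw [derivs_snoc]
    rw [hv, Module.End.mul_apply]
    have hP : Lowers (pEnd (v (Fin.last n))) := lowers_pderiv _
    rcases hP f with h | h
    · left
      rw [h, map_zero]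
    · rcases ih (Fin.init v) (pEnd (v (Fin.last n)) f) with h2 | h2
      · left; exact h2
      · right; omega

theorem derivs_eq_zero {m : ℕ} {v : Fin m → Fin 2} {f : PA} (h : f.totalDegree < m) :
    derivs v f = 0 := by
  rcases derivs_bound v f with h2 | h2
  · exact h2
  · omega

/-- snoc as an equivalence -/
def snocE (n : ℕ) : ((Fin n → Fin 2) × Fin 2) ≃ (Fin (n + 1) → Fin 2) where
  toFun p := Fin.snoc p.1 p.2
  invFun v := (Fin.init v, v (Fin.last n))
  left_inv p := by
    cases p
    simp [Fin.init_snoc, Fin.snoc_last]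
  right_inv v := Fin.snoc_init_self v

theorem sum_snoc {M : Type*} [AddCommMonoid M] (n : ℕ) (H : (Fin (n + 1) → Fin 2) → M) :
    (∑ v : Fin (n + 1) → Fin 2, H v)
      = ∑ i : Fin n → Fin 2, ∑ x : Fin 2, H (Fin.snoc i x) := by
  calc (∑ v : Fin (n + 1) → Fin 2, H v)
      = ∑ p : (Fin n → Fin 2) × Fin 2, H (Fin.snoc p.1 p.2) :=
        (Fintype.sum_equiv (snocE n) (fun p => H (Fin.snoc p.1 p.2)) H fun p => rfl).symm
    _ = ∑ i : Fin n → Fin 2, ∑ x : Fin 2, H (Fin.snoc i x) :=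
        Fintype.sum_prod_type fun p => H (Fin.snoc p.1 p.2)

theorem derivs_snoc_apply {n : ℕ} (i : Fin n → Fin 2) (x : Fin 2) (h : PA) :
    derivs (Fin.snoc i x) h = derivs i (pderiv x h) := by
  rw [derivs_snoc, Module.End.mul_apply]
  rfl

/-- Lemma D: expansion of powers of the mixed operator on a box -/
theorem opM_pow_box (Lam : Matrix (Fin 2) (Fin 2) ℂ) : ∀ (m : ℕ) (f g : PA),
    ((opM Lam Sum.inl Sum.inr) ^ m) (box f g)
      = ∑ i : Fin m → Fin 2, ∑ j : Fin m → Fin 2,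
        (∏ a, Lam (i a) (j a)) • box (derivs i f) (derivs j g) := by
  intro m
  induction m with
  | zero =>
    intro f g
    rw [pow_zero, Fintype.sum_unique, Fintype.sum_unique]
    simp [derivs_nil]
  | succ n ih =>
    intro f g
    have hstep1 : ((opM Lam Sum.inl Sum.inr) ^ (n + 1)) (box f g)
        = ∑ x : Fin 2, ∑ y : Fin 2, ∑ i : Fin n → Fin 2, ∑ j : Fin n → Fin 2,
            ((∏ a, Lam (i a) (j a)) * Lam x y) •
              box (derivs i (pderiv x f)) (derivs j (pderiv y g)) := by
      rw [pow_succ, Module.End.mul_apply, opM_box_mix, map_sum]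
      refine Finset.sum_congr rfl fun x _ => ?_
      rw [map_sum]
      refine Finset.sum_congr rfl fun y _ => ?_
      rw [map_smul, ih, Finset.smul_sum]
      refine Finset.sum_congr rfl fun i _ => ?_
      rw [Finset.smul_sum]
      refine Finset.sum_congr rfl fun j _ => ?_
      rw [smul_smul, mul_comm (Lam x y)]
    have hstep2 : (∑ v : Fin (n + 1) → Fin 2, ∑ w : Fin (n + 1) → Fin 2,
          (∏ a, Lam (v a) (w a)) • box (derivs v f) (derivs w g))
        = ∑ i : Fin n → Fin 2, ∑ x : Fin 2, ∑ j : Fin n → Fin 2, ∑ y : Fin 2,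
            ((∏ a, Lam (i a) (j a)) * Lam x y) •
              box (derivs i (pderiv x f)) (derivs j (pderiv y g)) := by
      rw [sum_snoc]
      refine Finset.sum_congr rfl fun i _ => Finset.sum_congr rfl fun x _ => ?_
      rw [sum_snoc]
      refine Finset.sum_congr rfl fun j _ => Finset.sum_congr rfl fun y _ => ?_
      rw [derivs_snoc_apply, derivs_snoc_apply]
      congr 1
      rw [Fin.prod_univ_castSucc]
      simp only [Fin.snoc_castSucc, Fin.snoc_last]
    rw [hstep1, hstep2]
    calc ∑ x : Fin 2, ∑ y : Fin 2, ∑ i : Fin n → Fin 2, ∑ j : Fin n → Fin 2,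
          ((∏ a, Lam (i a) (j a)) * Lam x y) •
            box (derivs i (pderiv x f)) (derivs j (pderiv y g))
        = ∑ x : Fin 2, ∑ i : Fin n → Fin 2, ∑ y : Fin 2, ∑ j : Fin n → Fin 2,
            ((∏ a, Lam (i a) (j a)) * Lam x y) •
              box (derivs i (pderiv x f)) (derivs j (pderiv y g)) :=
          Finset.sum_congr rfl fun x _ => Finset.sum_comm
      _ = ∑ i : Fin n → Fin 2, ∑ x : Fin 2, ∑ y : Fin 2, ∑ j : Fin n → Fin 2,
            ((∏ a, Lam (i a) (j a)) * Lam x y) •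
              box (derivs i (pderiv x f)) (derivs j (pderiv y g)) := Finset.sum_comm
      _ = ∑ i : Fin n → Fin 2, ∑ x : Fin 2, ∑ j : Fin n → Fin 2, ∑ y : Fin 2,
            ((∏ a, Lam (i a) (j a)) * Lam x y) •
              box (derivs i (pderiv x f)) (derivs j (pderiv y g)) :=
          Finset.sum_congr rfl fun i _ => Finset.sum_congr rfl fun x _ => Finset.sum_comm

/-- starK in exponential form -/
theorem starK_eq (hb : ℂ) (Lam : Matrix (Fin 2) (Fin 2) ℂ) (f g : PA) {N : ℕ}
    (hN : f.totalDegree < N) :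
    starK hb Lam f g
      = mu (E1 ((Complex.I * hb / 2) • opM Lam Sum.inl Sum.inr) N (box f g)) := by
  rw [E1_smul_apply, map_sum, starK]
  have hterm : ∀ m, starTerm hb Lam m f g
      = ((m.factorial : ℂ)⁻¹ * (Complex.I * hb / 2) ^ m) •
          mu (((opM Lam Sum.inl Sum.inr) ^ m) (box f g)) := by
    intro m
    rw [starTerm, opM_pow_box, map_sum]
    congr 1
    refine Finset.sum_congr rfl fun i _ => ?_
    rw [map_sum]
    refine Finset.sum_congr rfl fun j _ => ?_
    rw [map_smul, mu_box]
  have hsub : Finset.range (f.totalDegree + 1) ⊆ Finset.range N := by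
    intro x hx
    simp only [Finset.mem_range] at *
    omega
  rw [Finset.sum_subset hsub]
  · refine Finset.sum_congr rfl fun m _ => ?_
    rw [hterm, map_smul]
  · intro m _ hm
    simp only [Finset.mem_range, not_lt] at hm
    rw [starTerm]
    have hz : ∀ i : Fin m → Fin 2, derivs i f = 0 :=
      fun i => derivs_eq_zero (by omega)
    have : ∀ i : Fin m → Fin 2, ∑ j : Fin m → Fin 2,
        (∏ a, Lam (i a) (j a)) • (derivs i f * derivs j g) = 0 := by
      intro i
      refine Finset.sum_eq_zero fun j _ => ?_
      rw [hz i, zero_mul, smul_zero]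
    rw [Finset.sum_congr rfl fun i _ => this i]
    simp

/-- intertwiner in exponential form -/
theorem intertwiner_eq (hb : ℂ) (K K' : Matrix (Fin 2) (Fin 2) ℂ) (f : PA) {N : ℕ}
    (hN : f.totalDegree < N) :
    intertwiner hb K K' f = E1 ((Complex.I * hb / 4) • twistOp (K' - K)) N f := by
  rw [E1_smul_apply, intertwiner]
  have hsub : Finset.range (f.totalDegree + 1) ⊆ Finset.range N := by
    intro x hx
    simp only [Finset.mem_range] at *
    omega
  rw [Finset.sum_subset hsub]
  intro m _ hm
  simp only [Finset.mem_range, not_lt] at hm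
  rw [(lowers_twistOp (K' - K)).pow_eq_zero (by omega), smul_zero]

/-- powers of left/right operators on boxes -/
theorem E1_opL_box (c : ℂ) (A : Matrix (Fin 2) (Fin 2) ℂ) (N : ℕ) (a b : PA) :
    E1 (c • opM A Sum.inl Sum.inl) N (box a b) = box (E1 (c • twistOp A) N a) b := by
  have hpow : ∀ m a, ((c • opM A Sum.inl Sum.inl) ^ m) (box a b)
      = box (((c • twistOp A) ^ m) a) b := by
    intro m
    induction m with
    | zero => intro a; simp
    | succ n ih =>
      intro a
      rw [pow_succ, Module.End.mul_apply, LinearMap.smul_apply, opM_box_left,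
        ← box_smul_left, ih, pow_succ, Module.End.mul_apply, LinearMap.smul_apply]
  rw [E1_apply, E1_apply, box_sum_left]
  refine Finset.sum_congr rfl fun m _ => ?_
  rw [hpow, box_smul_left]

theorem E1_opR_box (c : ℂ) (A : Matrix (Fin 2) (Fin 2) ℂ) (N : ℕ) (a b : PA) :
    E1 (c • opM A Sum.inr Sum.inr) N (box a b) = box a (E1 (c • twistOp A) N b) := by
  have hpow : ∀ m b, ((c • opM A Sum.inr Sum.inr) ^ m) (box a b)
      = box a (((c • twistOp A) ^ m) b) := by
    intro m
    induction m with
    | zero => intro b; simp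
    | succ n ih =>
      intro b
      rw [pow_succ, Module.End.mul_apply, LinearMap.smul_apply, opM_box_right,
        ← box_smul_right, ih, pow_succ, Module.End.mul_apply, LinearMap.smul_apply]
  rw [E1_apply, E1_apply, box_sum_right]
  refine Finset.sum_congr rfl fun m _ => ?_
  rw [hpow, box_smul_right]

/-- degree bounds -/
theorem deg_box (f g : PA) : (box f g).totalDegree ≤ f.totalDegree + g.totalDegree := by
  refine (totalDegree_mul _ _).trans ?_
  exact add_le_add (totalDegree_rename_le _ _) (totalDegree_rename_le _ _)

theorem deg_mu (p : PR) : (mu p).totalDegree ≤ p.totalDegree :=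
  totalDegree_rename_le _ _

end Stmt17

/-- For a nonzero `ħ` and symmetric `2×2` complex matrices `K, K'`, the
intertwiner `I_K^{K'}` is a well-defined `ℂ`-linear bijection of `ℂ[u₁,u₂]` and
satisfies `I_K^{K'}(f ∗_K g) = (I_K^{K'} f) ∗_{K'} (I_K^{K'} g)`, i.e. it is an
algebra isomorphism from `(ℂ[u₁,u₂], ∗_K)` to `(ℂ[u₁,u₂], ∗_{K'})`. -/
theorem stmt_17 (hb : ℂ) (hhb : hb ≠ 0) (K K' : Matrix (Fin 2) (Fin 2) ℂ)
    (hK : K.IsSymm) (hK' : K'.IsSymm) :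
    (∀ f g : MvPolynomial (Fin 2) ℂ,
      intertwiner hb K K' (f + g) = intertwiner hb K K' f + intertwiner hb K K' g) ∧
    (∀ (c : ℂ) (f : MvPolynomial (Fin 2) ℂ),
      intertwiner hb K K' (c • f) = c • intertwiner hb K K' f) ∧
    Function.Bijective (intertwiner hb K K') ∧
    (∀ f g : MvPolynomial (Fin 2) ℂ,
      intertwiner hb K K' (starK hb (K + matJ) f g)
        = starK hb (K' + matJ) (intertwiner hb K K' f) (intertwiner hb K K' g)) := by
  open Stmt17 in
  have hS : (K' - K).IsSymm := by
    rw [Matrix.IsSymm, Matrix.transpose_sub, hK.eq, hK'.eq]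
  have hS2 : (K - K').IsSymm := by
    rw [Matrix.IsSymm, Matrix.transpose_sub, hK.eq, hK'.eq]
  have hlowT : ∀ (c : ℂ) (A : Matrix (Fin 2) (Fin 2) ℂ), Lowers (c • twistOp A) :=
    fun c A => (lowers_twistOp A).smul c
  refine ⟨?_, ?_, ?_, ?_⟩
  · -- additivity
    intro f g
    set N := max (f + g).totalDegree (max f.totalDegree g.totalDegree) + 1 with hN
    have h1 : (f + g).totalDegree < N := Nat.lt_succ_of_le (le_max_left _ _)
    have h2 : f.totalDegree < N :=
      Nat.lt_succ_of_le ((le_max_left _ _).trans (le_max_right _ _))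
    have h3 : g.totalDegree < N :=
      Nat.lt_succ_of_le ((le_max_right _ _).trans (le_max_right _ _))
    rw [intertwiner_eq hb K K' _ h1, intertwiner_eq hb K K' _ h2,
      intertwiner_eq hb K K' _ h3, map_add]
  · -- homogeneity
    intro c f
    have h2 : (c • f).totalDegree < f.totalDegree + 1 :=
      Nat.lt_succ_of_le (totalDegree_smul_le _ _)
    rw [intertwiner_eq hb K K' _ h2,
      intertwiner_eq hb K K' _ (Nat.lt_succ_self f.totalDegree), map_smul]
  · -- bijectivity
    have key : ∀ (A B : Matrix (Fin 2) (Fin 2) ℂ), B - A = -(A - B) →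
        ∀ f, intertwiner hb B A (intertwiner hb A B f) = f := by
      intro A B hAB f
      set N := f.totalDegree + 1 with hN
      have h1 : f.totalDegree < N := Nat.lt_succ_self _
      rw [intertwiner_eq hb A B f h1]
      have h2 : (E1 ((Complex.I * hb / 4) • twistOp (B - A)) N f).totalDegree < N :=
        lt_of_le_of_lt (E1_deg (hlowT _ _) N f) h1
      rw [intertwiner_eq hb B A _ h2, hAB, twistOp_neg, smul_neg, ← neg_smul]
      have hcomm : Commute ((Complex.I * hb / 4) • twistOp (A - B))
          ((-(Complex.I * hb / 4)) • twistOp (A - B)) :=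
        Commute.smul_left (Commute.smul_right (Commute.refl _) _) _
      rw [← expAdd hcomm (hlowT _ _) (hlowT _ _) h1, ← add_smul, add_neg_cancel, zero_smul,
        E1_zero_op (Nat.succ_pos _)]
    exact Function.bijective_iff_has_inverse.mpr
      ⟨intertwiner hb K' K, key K K' (by abel), key K' K (by abel)⟩
  · -- the star product intertwining relation
    intro f g
    set c' : ℂ := Complex.I * hb / 4 with hc'
    set d' : ℂ := Complex.I * hb / 2 with hd'
    set S : Matrix (Fin 2) (Fin 2) ℂ := K' - K with hSdef
    set N := f.totalDegree + g.totalDegree + 1 with hN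
    have hNf : f.totalDegree < N := by omega
    have hNg : g.totalDegree < N := by omega
    have hbox : (box f g).totalDegree < N := lt_of_le_of_lt (deg_box f g) (by omega)
    -- all operators in sight lower degree
    have hlow1 : Lowers (c' • bigM S) := by
      refine Lowers.smul c' ?_
      rw [bigM]
      exact ((lowers_opM _ _ _).add (lowers_opM _ _ _)).add ((lowers_opM _ _ _).smul _)
    have hlow2 : Lowers (d' • opM (K + matJ) Sum.inl Sum.inr) := (lowers_opM _ _ _).smul _
    have hlow3 : Lowers (d' • opM (K' + matJ) Sum.inl Sum.inr) := (lowers_opM _ _ _).smul _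
    have hlow4 : Lowers (c' • opM S Sum.inl Sum.inl + c' • opM S Sum.inr Sum.inr) :=
      ((lowers_opM _ _ _).smul _).add ((lowers_opM _ _ _).smul _)
    have hlow5 : Lowers (c' • opM S Sum.inl Sum.inl) := (lowers_opM _ _ _).smul _
    have hlow6 : Lowers (c' • opM S Sum.inr Sum.inr) := (lowers_opM _ _ _).smul _
    -- commutation facts
    have hcomm1 : Commute (c' • bigM S) (d' • opM (K + matJ) Sum.inl Sum.inr) := by
      refine Commute.smul_left (Commute.smul_right ?_ _) _
      rw [bigM]
      exact ((commute_opM _ _ _ _ _ _).add_left (commute_opM _ _ _ _ _ _)).add_left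
        ((commute_opM _ _ _ _ _ _).smul_left _)
    have hcomm2 : Commute (d' • opM (K' + matJ) Sum.inl Sum.inr)
        (c' • opM S Sum.inl Sum.inl + c' • opM S Sum.inr Sum.inr) := by
      refine Commute.smul_left ?_ _
      exact ((commute_opM _ _ _ _ _ _).smul_right _).add_right
        ((commute_opM _ _ _ _ _ _).smul_right _)
    have hcomm3 : Commute (c' • opM S Sum.inl Sum.inl) (c' • opM S Sum.inr Sum.inr) :=
      Commute.smul_left (Commute.smul_right (commute_opM _ _ _ _ _ _) _) _
    -- the operator identity
    have hop : c' • bigM S + d' • opM (K + matJ) Sum.inl Sum.inr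
        = d' • opM (K' + matJ) Sum.inl Sum.inr
          + (c' • opM S Sum.inl Sum.inl + c' • opM S Sum.inr Sum.inr) := by
      have hsplit : opM (K' + matJ) Sum.inl Sum.inr
          = opM (K + matJ) Sum.inl Sum.inr + opM S Sum.inl Sum.inr := by
        rw [← opM_add]
        congr 1
        rw [hSdef]
        abel
      have h2c : c' * 2 = d' := by rw [hc', hd']; ring
      rw [bigM, smul_add, smul_add, smul_smul, h2c, hsplit, smul_add]
      abel
    -- degree bookkeeping for the nested rewrites
    have hdegstar : (mu (E1 (d' • opM (K + matJ) Sum.inl Sum.inr) N (box f g))).totalDegree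
        < N := by
      refine lt_of_le_of_lt ((deg_mu _).trans ((E1_deg hlow2 N _).trans (deg_box f g))) ?_
      omega
    have hdegIf : (E1 (c' • twistOp S) N f).totalDegree < N :=
      lt_of_le_of_lt (E1_deg (hlowT _ _) N f) hNf
    calc intertwiner hb K K' (starK hb (K + matJ) f g)
        = intertwiner hb K K' (mu (E1 (d' • opM (K + matJ) Sum.inl Sum.inr) N (box f g))) := by
          rw [starK_eq hb (K + matJ) f g hNf]
      _ = E1 (c' • twistOp S) N (mu (E1 (d' • opM (K + matJ) Sum.inl Sum.inr) N (box f g))) :=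
          intertwiner_eq hb K K' _ hdegstar
      _ = mu (E1 (c' • bigM S) N (E1 (d' • opM (K + matJ) Sum.inl Sum.inr) N (box f g))) :=
          E1_comm_mu (fun p => twist_mu hS p) c' N _
      _ = mu (E1 (c' • bigM S + d' • opM (K + matJ) Sum.inl Sum.inr) N (box f g)) := by
          rw [← expAdd hcomm1 hlow1 hlow2 hbox]
      _ = mu (E1 (d' • opM (K' + matJ) Sum.inl Sum.inr
            + (c' • opM S Sum.inl Sum.inl + c' • opM S Sum.inr Sum.inr)) N (box f g)) := by
          rw [hop]
      _ = mu (E1 (d' • opM (K' + matJ) Sum.inl Sum.inr) N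
            (E1 (c' • opM S Sum.inl Sum.inl + c' • opM S Sum.inr Sum.inr) N (box f g))) := by
          rw [expAdd hcomm2 hlow3 hlow4 hbox]
      _ = mu (E1 (d' • opM (K' + matJ) Sum.inl Sum.inr) N
            (E1 (c' • opM S Sum.inl Sum.inl) N (E1 (c' • opM S Sum.inr Sum.inr) N
              (box f g)))) := by
          rw [expAdd hcomm3 hlow5 hlow6 hbox]
      _ = mu (E1 (d' • opM (K' + matJ) Sum.inl Sum.inr) N
            (box (E1 (c' • twistOp S) N f) (E1 (c' • twistOp S) N g))) := by
          rw [E1_opR_box, E1_opL_box]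
      _ = starK hb (K' + matJ) (E1 (c' • twistOp S) N f) (E1 (c' • twistOp S) N g) :=
          (starK_eq hb (K' + matJ) _ _ hdegIf).symm
      _ = starK hb (K' + matJ) (intertwiner hb K K' f) (intertwiner hb K K' g) := by
          rw [← intertwiner_eq hb K K' f hNf, ← intertwiner_eq hb K K' g hNg]
end
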